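/- If M ⊆ ℝⁿ is nonempty and reflection-invariant, then the Euclidean projection onto M is orthant-preserving: for all x ∈ ℝⁿ and p ∈ proj_M(x) and each coordinate i, either sgn(x_i) = sgn(p_i), or x_i = 0, or p_i = 0. -/

import Mathlib

noncomputable section

def projSet {n : ℕ} (M : Set (EuclideanSpace ℝ (Fin n))) (x : EuclideanSpace ℝ (Fin n)) :
    Set (EuclideanSpace ℝ (Fin n)) :=
  {p | p ∈ M ∧ ∀ q ∈ M, ‖p - x‖ ≤ ‖q - x‖}

/-- M is reflection-invariant: membership is stable under flipping signs of coordinates. -/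
def ReflInvariant {n : ℕ} (M : Set (EuclideanSpace ℝ (Fin n))) : Prop :=
  ∀ x ∈ M, ∀ b : Fin n → ℝ, (∀ i, b i = 1 ∨ b i = -1) →
    (WithLp.toLp 2 (fun i => b i * x i) : EuclideanSpace ℝ (Fin n)) ∈ M

theorem projection_onto_refl_invariant_is_orthant_preserving
    {n : ℕ} (M : Set (EuclideanSpace ℝ (Fin n))) (hM : M.Nonempty)
    (hrefl : ReflInvariant M)
    (x : EuclideanSpace ℝ (Fin n)) (p : EuclideanSpace ℝ (Fin n))
    (hp : p ∈ projSet M x) (i : Fin n) :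
    Real.sign (x i) = Real.sign (p i) ∨ x i = 0 ∨ p i = 0 := by
  by_contra h
  push_neg at h
  obtain ⟨hsgn, hx0, hp0⟩ := h
  -- signs differ and both nonzero ⇒ product negative
  have hxp : x i * p i < 0 := by
    rcases lt_trichotomy (x i) 0 with hx | hx | hx
    · rcases lt_trichotomy (p i) 0 with hpi | hpi | hpi
      · exact absurd (by rw [Real.sign_of_neg hx, Real.sign_of_neg hpi]) hsgn
      · exact absurd hpi hp0
      · exact mul_neg_of_neg_of_pos hx hpi
    · exact absurd hx hx0
    · rcases lt_trichotomy (p i) 0 with hpi | hpi | hpi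
      · exact mul_neg_of_pos_of_neg hx hpi
      · exact absurd hpi hp0
      · exact absurd (by rw [Real.sign_of_pos hx, Real.sign_of_pos hpi]) hsgn
  set b : Fin n → ℝ := fun j => if j = i then -1 else 1 with hb_def
  have hb : ∀ j, b j = 1 ∨ b j = -1 := by
    intro j
    by_cases hj : j = i <;> simp [hb_def, hj]
  have hq : (WithLp.toLp 2 (fun j => b j * p j) : EuclideanSpace ℝ (Fin n)) ∈ M := hrefl p hp.1 b hb
  have hle := hp.2 _ hq
  set q : EuclideanSpace ℝ (Fin n) := WithLp.toLp 2 (fun j => b j * p j) with hq_def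
  have hlt : ‖q - x‖ < ‖p - x‖ := by
    rw [EuclideanSpace.norm_eq, EuclideanSpace.norm_eq]
    simp only [PiLp.sub_apply, Real.norm_eq_abs, sq_abs]
    apply Real.sqrt_lt_sqrt
    · positivity
    · apply Finset.sum_lt_sum
      · intro j _
        rcases eq_or_ne j i with hj | hj
        · subst hj
          have : q j - x j = -p j - x j := by
            simp [hq_def, hb_def]
          rw [this]
          nlinarith [hxp]
        · have : q j = p j := by simp [hq_def, hb_def, hj]
          rw [this]
      · refine ⟨i, Finset.mem_univ i, ?_⟩
        have : q i - x i = -p i - x i := by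
          simp [hq_def, hb_def]
        rw [this]
        nlinarith [hxp]
  exact absurd hle (not_le.mpr hlt)

end
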